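/- arXiv:0803.0855 — 2 statements merged into one kernel-verified Lean document; each statement's English description precedes it below -/
import Mathlib

section
/- Let F be a field, n ≥ 1 an integer, and Q an n×n matrix over F all of whose row sums and all of whose column sums are zero. Then all first cofactors of Q are equal; equivalently, all entries of the adjugate matrix of Q are equal to a common scalar κ*, so that adj(Q) = κ*·J, where J is the all-ones matrix. -/
/-- If a matrix `Q` over a field has all row sums zero and some `(i₀, j₀)` minor with nonzero
determinant, then every vector in the kernel of `Q` (as `mulVec`) is constant. -/
lemma ker_vec_const {F : Type*} [Field F] {m : ℕ} (Q : Matrix (Fin (m + 1)) (Fin (m + 1)) F)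
    (hrow : ∀ i, ∑ j, Q i j = 0) (i₀ j₀ : Fin (m + 1))
    (hdet : (Q.submatrix i₀.succAbove j₀.succAbove).det ≠ 0)
    (v : Fin (m + 1) → F) (hv : Q.mulVec v = 0) : ∀ i, v i = v j₀ := by
  set w : Fin (m + 1) → F := fun i => v i - v j₀ with hw
  have hQw : Q.mulVec w = 0 := by
    funext i
    have h0 := congrFun hv i
    simp only [Matrix.mulVec, dotProduct, Pi.zero_apply] at h0 ⊢
    simp only [hw]
    rw [show (∑ j, Q i j * (v j - v j₀)) = (∑ j, Q i j * v j) - (∑ j, Q i j) * v j₀ by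
      rw [Finset.sum_mul, ← Finset.sum_sub_distrib]
      exact Finset.sum_congr rfl fun j _ => by ring]
    rw [h0, hrow]
    ring
  have hker : (Q.submatrix i₀.succAbove j₀.succAbove).mulVec (fun k => w (j₀.succAbove k)) = 0 := by
    funext k
    have := congrFun hQw (i₀.succAbove k)
    simp only [Matrix.mulVec, dotProduct, Pi.zero_apply] at this ⊢
    rw [Fin.sum_univ_succAbove (fun j => Q (i₀.succAbove k) j * w j) j₀] at this
    have hwj₀ : w j₀ = 0 := by simp [hw]
    rw [hwj₀, mul_zero, zero_add] at this
    simpa [Matrix.submatrix] using this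
  have hzero : (fun k => w (j₀.succAbove k)) = 0 :=
    Matrix.eq_zero_of_mulVec_eq_zero hdet hker
  intro i
  rcases eq_or_ne i j₀ with h | h
  · rw [h]
  · obtain ⟨k, hk⟩ := Fin.exists_succAbove_eq (Ne.symm h).symm
    have := congrFun hzero k
    rw [hk] at this
    simpa [hw, sub_eq_zero] using this

/-- Let `F` be a field, `n ≥ 1`, and `Q` an `n × n` matrix over `F` all of whose row sums
and column sums are zero.  Then all first cofactors of `Q` are equal: all entries of the
adjugate matrix of `Q` equal a common scalar `κ*`, i.e. `adj(Q) = κ* · J` for the all-ones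
matrix `J`. -/
theorem stmt_2 (F : Type*) [Field F] (n : ℕ) (hn : 1 ≤ n)
    (Q : Matrix (Fin n) (Fin n) F)
    (hrow : ∀ i, ∑ j, Q i j = 0) (hcol : ∀ j, ∑ i, Q i j = 0) :
    ∃ κ : F, Q.adjugate = Matrix.of fun _ _ => κ := by
  obtain ⟨m, rfl⟩ : ∃ m, n = m + 1 := ⟨n - 1, (Nat.succ_pred_eq_of_pos hn).symm⟩
  -- det Q = 0 since the all-ones vector is in the kernel
  have hones : Q.mulVec (fun _ => 1) = 0 := by
    funext i
    simpa [Matrix.mulVec, dotProduct] using hrow i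
  have hdet : Q.det = 0 := by
    rw [← Matrix.exists_mulVec_eq_zero_iff]
    exact ⟨fun _ => 1, by simp [funext_iff], hones⟩
  have hQA : Q * Q.adjugate = 0 := by rw [Matrix.mul_adjugate, hdet, zero_smul]
  have hAQ : Q.adjugate * Q = 0 := by rw [Matrix.adjugate_mul, hdet, zero_smul]
  by_cases hA : Q.adjugate = 0
  · exact ⟨0, by rw [hA]; ext i j; simp⟩
  · -- pick a nonzero entry of the adjugate; the corresponding minor is nonzero
    obtain ⟨i₀, j₀, h₀⟩ : ∃ i j, Q.adjugate i j ≠ 0 := by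
      by_contra h
      push_neg at h
      exact hA (by ext i j; simpa using h i j)
    have hminor : (Q.submatrix j₀.succAbove i₀.succAbove).det ≠ 0 := by
      intro h
      apply h₀
      rw [Matrix.adjugate_fin_succ_eq_det_submatrix, h, mul_zero]
    -- columns of adj Q are constant
    have hcolconst : ∀ i j, Q.adjugate i j = Q.adjugate i₀ j := by
      intro i j
      have hv : Q.mulVec (fun i => Q.adjugate i j) = 0 := by
        funext k
        have := congrFun (congrFun hQA k) j
        simpa [Matrix.mul_apply, Matrix.mulVec, dotProduct] using this
      exact ker_vec_const Q hrow j₀ i₀ hminor _ hv i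
    -- rows of adj Q are constant, using the transpose
    have hminorT : (Q.transpose.submatrix i₀.succAbove j₀.succAbove).det ≠ 0 := by
      have h : Q.transpose.submatrix i₀.succAbove j₀.succAbove
          = (Q.submatrix j₀.succAbove i₀.succAbove).transpose := rfl
      rw [h, Matrix.det_transpose]
      exact hminor
    have hrowconst : ∀ i j, Q.adjugate i j = Q.adjugate i j₀ := by
      intro i j
      have hv : Q.transpose.mulVec (fun j => Q.adjugate i j) = 0 := by
        funext k
        have := congrFun (congrFun hAQ i) k
        simp only [Matrix.mul_apply, Pi.zero_apply, Matrix.zero_apply] at this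
        simpa [Matrix.mulVec, dotProduct, Matrix.transpose_apply, mul_comm] using this
      exact ker_vec_const Q.transpose (fun j => by simpa using hcol j) i₀ j₀ hminorT _ hv j
  -- combine
    refine ⟨Q.adjugate i₀ j₀, ?_⟩
    ext i j
    rw [Matrix.of_apply, hrowconst i j, hcolconst i j₀]
end

section
/- Let G be a connected weighted multigraph and let e_k be an edge with distinct endpoints p_i and p_j. Then for all positive edge lengths ℓ_1,…,ℓ_m one has r(p_i,p_j)·η_G(ℓ_1,…,ℓ_m) = ℓ_k · η_G(ℓ_1,…,ℓ_m)|_{ℓ_k = 0}; in particular, as a polynomial in the lengths, ℓ_k divides r(p_i,p_j)·η_G and the quotient is the polynomial η_G evaluated at ℓ_k = 0. -/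
open scoped Classical
open Matrix Filter Topology

/-- A weighted multigraph with vertex type `V` and edge index type `E`:
each edge is assigned an (ordered representative of an unordered) pair of endpoints. -/
structure WMG (V E : Type) where
  ends : E → V × V

namespace WMG

variable {V E : Type} [Fintype V] [DecidableEq V] [Fintype E] [DecidableEq E]

/-- `a` and `b` are joined by some edge belonging to `S`. -/
def Step (G : WMG V E) (S : Set E) (a b : V) : Prop :=
  ∃ k ∈ S, G.ends k = (a, b) ∨ G.ends k = (b, a)

/-- Any two vertices can be joined by a walk using only edges from `S`. -/
def ConnectedVia (G : WMG V E) (S : Set E) : Prop :=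
  ∀ a b : V, Relation.ReflTransGen (G.Step S) a b

/-- `G` is connected. -/
def Connected (G : WMG V E) : Prop := G.ConnectedVia Set.univ

/-- A set `T` of edges is a spanning tree: it has `#V - 1` edges and connects all vertices. -/
def IsSpanningTree (G : WMG V E) (T : Finset E) : Prop :=
  T.card + 1 = Fintype.card V ∧ G.ConnectedVia ↑T

/-- `η_G(ℓ) = Σ_{T spanning tree} Π_{k ∉ T} ℓ_k`. -/
noncomputable def eta (G : WMG V E) (ℓ : E → ℝ) : ℝ :=
  ∑ T : Finset E, if G.IsSpanningTree T then ∏ k ∈ Tᶜ, ℓ k else 0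

/-- The weighted Laplacian matrix of `G`. -/
noncomputable def lap (G : WMG V E) (ℓ : E → ℝ) : Matrix V V ℝ :=
  Matrix.of fun a b =>
    if a = b then
      ∑ k : E, if ((G.ends k).1 = a ∨ (G.ends k).2 = a) ∧ (G.ends k).1 ≠ (G.ends k).2
        then (ℓ k)⁻¹ else 0
    else
      - ∑ k : E, if G.ends k = (a, b) ∨ G.ends k = (b, a) then (ℓ k)⁻¹ else 0

/-- The standard basis vector (point mass) at a vertex. -/
def delta (a : V) : V → ℝ := fun x => if x = a then 1 else 0

/-- Effective resistance `r(a,b)`: the entry at `a` of the unique solution `h` of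
`Q^{(b)} h = u_a` (the Laplacian with row and column `b` deleted).  Equivalently, writing
`h̃` for the extension of `h` by `h̃ b = 0`, it is the entry at `a` of the unique `v` with
`Q v = δ_a - δ_b` and `v b = 0` (the two systems have the same solutions since all row and
column sums of `Q` vanish).  We set `r(a,a) = 0`; this is automatic in the connected case. -/
noncomputable def res (G : WMG V E) (ℓ : E → ℝ) (a b : V) : ℝ :=
  if h : ∃! v : V → ℝ, G.lap ℓ *ᵥ v = delta a - delta b ∧ v b = 0
  then h.exists.choose a else 0

/-- The valence of a vertex (loop edges counted twice). -/
def valence (G : WMG V E) (a : V) : ℕ :=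
  ∑ k : E, ((if (G.ends k).1 = a then 1 else 0) + (if (G.ends k).2 = a then 1 else 0))

/-- The genus of the polarized graph `(G, q)`: `g = #E - #V + 1 + Σ_a q(a)`. -/
def genus (G : WMG V E) (q : V → ℕ) : ℤ :=
  (Fintype.card E : ℤ) - (Fintype.card V : ℤ) + 1 + ∑ a, (q a : ℤ)

/-- The canonical divisor `K(a) = 2 q(a) + v(a) - 2`, as a real number. -/
noncomputable def Kdiv (G : WMG V E) (q : V → ℕ) (a : V) : ℝ :=
  2 * (q a : ℝ) + (G.valence a : ℝ) - 2

/-- `F(e_k) = 1 - r(e_k)/ℓ_k` where `r(e_k)` is the resistance between the endpoints. -/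
noncomputable def Fres (G : WMG V E) (ℓ : E → ℝ) (k : E) : ℝ :=
  1 - G.res ℓ (G.ends k).1 (G.ends k).2 / ℓ k

/-- Zhang's invariant `ε` of the polarized metric graph, via the paper's explicit formula. -/
noncomputable def epsilon (G : WMG V E) (q : V → ℕ) (ℓ : E → ℝ) : ℝ :=
  (1 / (G.genus q : ℝ)) * ∑ a, ∑ b, (q a : ℝ) * G.Kdiv q b * G.res ℓ a b
  + (((G.genus q : ℝ) - 1) / (3 * (G.genus q : ℝ))) * ∑ k, (G.Fres ℓ k) ^ 2 * ℓ k
  + (1 / (2 * (G.genus q : ℝ))) * ∑ a, G.Kdiv q a *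
      ∑ k, G.Fres ℓ k * (G.res ℓ a (G.ends k).1 + G.res ℓ a (G.ends k).2)

/-- `r(K, K) = Σ_{a,b} K(a) K(b) r(a,b)`. -/
noncomputable def rKK (G : WMG V E) (q : V → ℕ) (ℓ : E → ℝ) : ℝ :=
  ∑ a, ∑ b, G.Kdiv q a * G.Kdiv q b * G.res ℓ a b

/-- Zhang's invariant `φ` of the polarized metric graph, via the paper's explicit formula
`φ = ((5g-2)/(4(g-1))) ε - (3/(8(g-1))) r(K,K) - ℓ(G)/4`. -/
noncomputable def phi (G : WMG V E) (q : V → ℕ) (ℓ : E → ℝ) : ℝ :=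
  ((5 * (G.genus q : ℝ) - 2) / (4 * ((G.genus q : ℝ) - 1))) * G.epsilon q ℓ
  - (3 / (8 * ((G.genus q : ℝ) - 1))) * G.rKK q ℓ
  - (∑ k, ℓ k) / 4

/-- The map on vertices identifying `b` with `a` (realized on the subtype omitting `b`). -/
def fuseV (a b : V) (hab : a ≠ b) (x : V) : {y : V // y ≠ b} :=
  if h : x = b then ⟨a, hab⟩ else ⟨x, h⟩

/-- The fusion `G'` of two distinct vertices `a, b` of `G`: identify `a` and `b`,
keeping all edges and lengths. -/
def fuse (G : WMG V E) (a b : V) (hab : a ≠ b) : WMG {y : V // y ≠ b} E :=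
  ⟨fun k => (fuseV a b hab (G.ends k).1, fuseV a b hab (G.ends k).2)⟩

/-- The contraction `G/e` of a non-loop edge: identify the two endpoints of `e`,
delete `e`, and keep all other edges. -/
def contract (G : WMG V E) (k0 : E) (hk : (G.ends k0).1 ≠ (G.ends k0).2) :
    WMG {y : V // y ≠ (G.ends k0).2} {k : E // k ≠ k0} :=
  ⟨fun k => (fuseV (G.ends k0).1 (G.ends k0).2 hk (G.ends k.1).1,
             fuseV (G.ends k0).1 (G.ends k0).2 hk (G.ends k.1).2)⟩

end WMG

/-- The `i`-th elementary symmetric polynomial of the family `ℓ`. -/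
noncomputable def esymE {E : Type} [Fintype E] [DecidableEq E] (i : ℕ) (ℓ : E → ℝ) : ℝ :=
  ∑ s ∈ Finset.powersetCard i (Finset.univ : Finset E), ∏ k ∈ s, ℓ k


namespace WMG

variable {V E : Type} [Fintype V] [DecidableEq V] [Fintype E] [DecidableEq E]

/-- Incidence value of vertex `x` at edge `e`. -/
noncomputable def inc (G : WMG V E) (x : V) (e : E) : ℝ :=
  (if (G.ends e).1 = x then 1 else 0) - (if (G.ends e).2 = x then 1 else 0)

lemma step_symm {G : WMG V E} {S : Set E} {x y : V} (h : G.Step S x y) : G.Step S y x := by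
  obtain ⟨f, hf, h⟩ := h; exact ⟨f, hf, h.symm⟩

lemma reach_symm {G : WMG V E} {S : Set E} {x y : V}
    (h : Relation.ReflTransGen (G.Step S) x y) : Relation.ReflTransGen (G.Step S) y x := by
  induction h with
  | refl => exact .refl
  | tail _ hstep ih => exact Relation.ReflTransGen.head (step_symm hstep) ih

lemma reach_mono {G : WMG V E} {S S' : Set E} (hss : S ⊆ S') {x y : V}
    (h : Relation.ReflTransGen (G.Step S) x y) : Relation.ReflTransGen (G.Step S') x y := by
  refine Relation.ReflTransGen.mono ?_ _ _ h
  rintro a b ⟨f, hf, h⟩; exact ⟨f, hss hf, h⟩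

lemma remove_edge {G : WMG V E} {S : Set E} {Tgt : Set V} {e : E}
    (h1 : (G.ends e).1 ∈ Tgt) (h2 : (G.ends e).2 ∈ Tgt) {x t : V}
    (hr : Relation.ReflTransGen (G.Step S) x t) (ht : t ∈ Tgt) :
    ∃ t', t' ∈ Tgt ∧ Relation.ReflTransGen (G.Step (S \ {e})) x t' := by
  induction hr using Relation.ReflTransGen.head_induction_on with
  | refl => exact ⟨t, ht, .refl⟩
  | head hstep _ ih =>
      obtain ⟨f, hf, hor⟩ := hstep
      by_cases hfe : f = e
      · subst hfe
        rcases hor with h | h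
        · exact ⟨_, by simpa [h] using h1, .refl⟩
        · exact ⟨_, by simpa [h] using h2, .refl⟩
      · obtain ⟨t', ht', hp⟩ := ih
        exact ⟨t', ht', Relation.ReflTransGen.head ⟨f, ⟨hf, hfe⟩, hor⟩ hp⟩

lemma crossing {G : WMG V E} {S : Set E} {R : Set V} {x t : V}
    (hr : Relation.ReflTransGen (G.Step S) x t) (hx : x ∈ R) (ht : t ∉ R) :
    ∃ f ∈ S, ((G.ends f).1 ∈ R ∧ (G.ends f).2 ∉ R) ∨ ((G.ends f).2 ∈ R ∧ (G.ends f).1 ∉ R) := by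
  revert hx
  induction hr using Relation.ReflTransGen.head_induction_on with
  | refl => exact fun hx => absurd hx ht
  | @head a c hstep _ ih =>
      intro ha
      by_cases hc : c ∈ R
      · exact ih hc
      · obtain ⟨f, hf, hor⟩ := hstep
        refine ⟨f, hf, ?_⟩
        rcases hor with h | h
        · exact Or.inl ⟨by rw [h]; exact ha, by rw [h]; exact hc⟩
        · exact Or.inr ⟨by rw [h]; exact ha, by rw [h]; exact hc⟩

lemma lap_apply_inc (G : WMG V E) (ℓ : E → ℝ) (x y : V) :
    G.lap ℓ x y = ∑ e, (ℓ e)⁻¹ * G.inc x e * G.inc y e := by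
  unfold lap inc
  by_cases hxy : x = y
  · subst hxy
    simp only [of_apply, if_pos rfl]
    refine Finset.sum_congr rfl fun e _ => ?_
    by_cases h1 : (G.ends e).1 = x <;> by_cases h2 : (G.ends e).2 = x
    · simp [h1, h2]
    · rw [if_pos ⟨Or.inl h1, fun hh => h2 (by rw [← hh]; exact h1)⟩]; simp [h1, h2]
    · rw [if_pos ⟨Or.inr h2, fun hh => h1 (by rw [hh]; exact h2)⟩]; simp [h1, h2]
    · rw [if_neg (by rintro ⟨h3 | h3, _⟩; exacts [h1 h3, h2 h3])]; simp [h1, h2]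
  · simp only [of_apply, if_neg hxy]
    rw [← Finset.sum_neg_distrib]
    refine Finset.sum_congr rfl fun e _ => ?_
    by_cases h1 : (G.ends e).1 = x <;> by_cases h2 : (G.ends e).2 = x <;>
      by_cases h3 : (G.ends e).1 = y <;> by_cases h4 : (G.ends e).2 = y <;>
      simp_all [Prod.ext_iff] <;> ring

end WMG


namespace WMG

section DetLemmas

variable {V E : Type} [Fintype V] [DecidableEq V] [Fintype E] [DecidableEq E]

lemma claimB {G : WMG V E} {n : ℕ} (ρ : Fin n → V) (σ : Fin n → E)
    (hρ : Function.Injective ρ)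
    (hbad : ∃ x : V, ∀ t, t ∉ Set.range ρ → ¬ Relation.ReflTransGen (G.Step (Set.range σ)) x t) :
    Matrix.det (Matrix.of fun i j => G.inc (ρ i) (σ j)) = 0 := by
  obtain ⟨x, hx⟩ := hbad
  classical
  set NR : V → Prop := fun v => ¬ ∃ t, t ∉ Set.range ρ ∧
      Relation.ReflTransGen (G.Step (Set.range σ)) v t with hNRdef
  have hstepNR : ∀ v w, G.Step (Set.range σ) v w → (NR v ↔ NR w) := by
    intro v w hs
    constructor
    · intro hv; rintro ⟨t, ht, hr⟩
      exact hv ⟨t, ht, Relation.ReflTransGen.head hs hr⟩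
    · intro hw; rintro ⟨t, ht, hr⟩
      exact hw ⟨t, ht, Relation.ReflTransGen.head (step_symm hs) hr⟩
  set z : Fin n → ℝ := fun i => if NR (ρ i) then 1 else 0 with hzdef
  set ζ : V → ℝ := fun v => if NR v ∧ v ∈ Set.range ρ then 1 else 0 with hζdef
  have hsum : ∀ y : V, (∑ i, z i * (if y = ρ i then 1 else 0)) = ζ y := by
    intro y
    by_cases hy : y ∈ Set.range ρ
    · obtain ⟨i₀, rfl⟩ := hy
      rw [Finset.sum_eq_single i₀]
      · by_cases hn : NR (ρ i₀)
        · simp [hzdef, hζdef, hn, Set.mem_range_self]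
        · simp [hzdef, hζdef, hn]
      · intro i _ hne
        rw [if_neg (fun hh => hne (hρ hh).symm), mul_zero]
      · intro h; exact absurd (Finset.mem_univ i₀) h
    · rw [Finset.sum_eq_zero]
      · simp only [hζdef]
        rw [if_neg (fun c => hy c.2)]
      · intro i _; rw [if_neg (fun hh : y = ρ i => hy ⟨i, hh.symm⟩), mul_zero]
  have hvm : z ᵥ* (Matrix.of fun i j => G.inc (ρ i) (σ j)) = 0 := by
    funext j
    have expand : (z ᵥ* (Matrix.of fun i j => G.inc (ρ i) (σ j))) j
        = ∑ i, z i * G.inc (ρ i) (σ j) := rfl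
    rw [expand]
    have : ∀ i, z i * G.inc (ρ i) (σ j)
        = z i * (if (G.ends (σ j)).1 = ρ i then 1 else 0)
          - z i * (if (G.ends (σ j)).2 = ρ i then 1 else 0) := by
      intro i; rw [inc, mul_sub]
    rw [Finset.sum_congr rfl fun i _ => this i, Finset.sum_sub_distrib]
    have h1 : (∑ i, z i * (if (G.ends (σ j)).1 = ρ i then 1 else 0)) = ζ (G.ends (σ j)).1 :=
      hsum _
    have h2 : (∑ i, z i * (if (G.ends (σ j)).2 = ρ i then 1 else 0)) = ζ (G.ends (σ j)).2 :=
      hsum _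
    rw [h1, h2]
    have hst : G.Step (Set.range σ) (G.ends (σ j)).1 (G.ends (σ j)).2 :=
      ⟨σ j, ⟨j, rfl⟩, Or.inl (Prod.mk.eta).symm⟩
    have hζeq : ζ (G.ends (σ j)).1 = ζ (G.ends (σ j)).2 := by
      set s := (G.ends (σ j)).1
      set t := (G.ends (σ j)).2
      by_cases m1 : s ∈ Set.range ρ <;> by_cases m2 : t ∈ Set.range ρ
      · have hiff : NR s ↔ NR t := hstepNR _ _ hst
        by_cases hn : NR s
        · simp only [hζdef]; rw [if_pos ⟨hn, m1⟩, if_pos ⟨hiff.mp hn, m2⟩]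
        · simp only [hζdef]; rw [if_neg (fun c => hn c.1), if_neg (fun c => hn (hiff.mpr c.1))]
      · simp only [hζdef]
        rw [if_neg (fun c => c.1 ⟨t, m2, Relation.ReflTransGen.single hst⟩),
          if_neg (fun c => m2 c.2)]
      · simp only [hζdef]
        rw [if_neg (fun c => m1 c.2),
          if_neg (fun c => c.1 ⟨s, m1, Relation.ReflTransGen.single (step_symm hst)⟩)]
      · simp only [hζdef]; rw [if_neg (fun c => m1 c.2), if_neg (fun c => m2 c.2)]
    rw [hζeq, sub_self]
    rfl
  have hzne : z ≠ 0 := by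
    have hxr : x ∈ Set.range ρ := by
      by_contra hxr; exact hx x hxr Relation.ReflTransGen.refl
    obtain ⟨i₁, rfl⟩ := hxr
    intro h0
    have h1 : z i₁ = 0 := congrFun h0 i₁
    have hNRx : NR (ρ i₁) := by rintro ⟨t, ht, hr⟩; exact hx t ht hr
    simp only [hzdef, if_pos hNRx] at h1; exact one_ne_zero h1
  exact Matrix.exists_vecMul_eq_zero_iff.mp ⟨z, hzne, hvm⟩

lemma pivot {n : ℕ} (A : Matrix (Fin (n+1)) (Fin (n+1)) ℝ) (i₀ j₀ : Fin (n+1))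
    (h : ∀ i, i ≠ i₀ → A i j₀ = 0) :
    A.det ^ 2 = (A i₀ j₀) ^ 2 * ((A.submatrix i₀.succAbove j₀.succAbove).det) ^ 2 := by
  rw [Matrix.det_succ_column A j₀,
    Finset.sum_eq_single i₀ (fun i _ hne => by rw [h i hne]; ring)
      (fun hmem => absurd (Finset.mem_univ i₀) hmem)]
  rw [mul_pow, mul_pow]
  have hs : ((-1 : ℝ) ^ (i₀ + j₀ : ℕ)) ^ 2 = 1 := by
    rw [← pow_mul, mul_comm, pow_mul]; norm_num
  rw [hs, one_mul]

lemma claimA {G : WMG V E} : ∀ (n : ℕ) (ρ : Fin n → V) (σ : Fin n → E),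
    Function.Injective ρ → Function.Injective σ →
    (∀ x : V, ∃ t, t ∉ Set.range ρ ∧ Relation.ReflTransGen (G.Step (Set.range σ)) x t) →
    (Matrix.det (Matrix.of fun i j => G.inc (ρ i) (σ j))) ^ 2 = 1 := by
  intro n
  induction n with
  | zero =>
      intro ρ σ _ _ _
      rw [Matrix.det_isEmpty]; norm_num
  | succ n ih =>
      intro ρ σ hρ hσ hgood
      obtain ⟨t, htρ, hreach⟩ := hgood (ρ 0)
      obtain ⟨f, hfS, hor⟩ := crossing (R := Set.range ρ) hreach ⟨0, rfl⟩ htρ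
      obtain ⟨j₀, rfl⟩ := hfS
      obtain ⟨i₀, hi₀⟩ : ∃ i₀, (ρ i₀ = (G.ends (σ j₀)).1 ∧ (G.ends (σ j₀)).2 ∉ Set.range ρ)
          ∨ (ρ i₀ = (G.ends (σ j₀)).2 ∧ (G.ends (σ j₀)).1 ∉ Set.range ρ) := by
        rcases hor with ⟨⟨i₀, hi⟩, h2⟩ | ⟨⟨i₀, hi⟩, h2⟩
        · exact ⟨i₀, Or.inl ⟨hi, h2⟩⟩
        · exact ⟨i₀, Or.inr ⟨hi, h2⟩⟩
      have hcol : ∀ i, i ≠ i₀ → (Matrix.of fun i j => G.inc (ρ i) (σ j)) i j₀ = 0 := by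
        intro i hne
        show G.inc (ρ i) (σ j₀) = 0
        rcases hi₀ with ⟨h1, h2⟩ | ⟨h1, h2⟩
        · have e1 : ¬ ((G.ends (σ j₀)).1 = ρ i) := fun hh => hne (hρ (h1.trans hh)).symm
          have e2 : ¬ ((G.ends (σ j₀)).2 = ρ i) := fun hh => h2 ⟨i, hh.symm⟩
          rw [inc, if_neg e1, if_neg e2, sub_zero]
        · have e2 : ¬ ((G.ends (σ j₀)).2 = ρ i) := fun hh => hne (hρ (h1.trans hh)).symm
          have e1 : ¬ ((G.ends (σ j₀)).1 = ρ i) := fun hh => h2 ⟨i, hh.symm⟩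
          rw [inc, if_neg e1, if_neg e2, sub_zero]
      have hsq1 : ((Matrix.of fun i j => G.inc (ρ i) (σ j)) i₀ j₀) ^ 2 = 1 := by
        show (G.inc (ρ i₀) (σ j₀)) ^ 2 = 1
        rcases hi₀ with ⟨h1, h2⟩ | ⟨h1, h2⟩
        · have he1 : (G.ends (σ j₀)).1 = ρ i₀ := h1.symm
          have he2 : ¬ ((G.ends (σ j₀)).2 = ρ i₀) := fun hh => h2 ⟨i₀, hh.symm⟩
          rw [inc, if_pos he1, if_neg he2]; norm_num
        · have he2 : (G.ends (σ j₀)).2 = ρ i₀ := h1.symm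
          have he1 : ¬ ((G.ends (σ j₀)).1 = ρ i₀) := fun hh => h2 ⟨i₀, hh.symm⟩
          rw [inc, if_pos he2, if_neg he1]; norm_num
      have hρ' : Function.Injective (ρ ∘ i₀.succAbove) :=
        hρ.comp Fin.succAbove_right_injective
      have hσ' : Function.Injective (σ ∘ j₀.succAbove) :=
        hσ.comp Fin.succAbove_right_injective
      have hrρ : Set.range (ρ ∘ i₀.succAbove) = Set.range ρ \ {ρ i₀} := by
        rw [Set.range_comp, Fin.range_succAbove]
        ext y
        simp only [Set.mem_image, Set.mem_compl_iff, Set.mem_singleton_iff, Set.mem_diff,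
          Set.mem_range]
        constructor
        · rintro ⟨i, hi, rfl⟩; exact ⟨⟨i, rfl⟩, fun hh => hi (hρ hh)⟩
        · rintro ⟨⟨i, rfl⟩, hne⟩; exact ⟨i, fun hh => hne (by rw [hh]), rfl⟩
      have hrσ : Set.range (σ ∘ j₀.succAbove) = Set.range σ \ {σ j₀} := by
        rw [Set.range_comp, Fin.range_succAbove]
        ext y
        simp only [Set.mem_image, Set.mem_compl_iff, Set.mem_singleton_iff, Set.mem_diff,
          Set.mem_range]
        constructor
        · rintro ⟨i, hi, rfl⟩; exact ⟨⟨i, rfl⟩, fun hh => hi (hσ hh)⟩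
        · rintro ⟨⟨i, rfl⟩, hne⟩; exact ⟨i, fun hh => hne (by rw [hh]), rfl⟩
      have hgood' : ∀ x : V, ∃ t', t' ∉ Set.range (ρ ∘ i₀.succAbove) ∧
          Relation.ReflTransGen (G.Step (Set.range (σ ∘ j₀.succAbove))) x t' := by
        intro x
        obtain ⟨t, ht, hr⟩ := hgood x
        have hTgt1 : (G.ends (σ j₀)).1 ∈ (Set.range (ρ ∘ i₀.succAbove))ᶜ := by
          rw [hrρ]
          rcases hi₀ with ⟨h1, _⟩ | ⟨_, h2⟩
          · intro hc; exact hc.2 h1.symm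
          · intro hc; exact h2 hc.1
        have hTgt2 : (G.ends (σ j₀)).2 ∈ (Set.range (ρ ∘ i₀.succAbove))ᶜ := by
          rw [hrρ]
          rcases hi₀ with ⟨_, h2⟩ | ⟨h1, _⟩
          · intro hc; exact h2 hc.1
          · intro hc; exact hc.2 h1.symm
        have htT : t ∈ (Set.range (ρ ∘ i₀.succAbove))ᶜ := by
          rw [hrρ]; intro hc; exact ht hc.1
        obtain ⟨t', ht', hr'⟩ := remove_edge hTgt1 hTgt2 hr htT
        refine ⟨t', ht', ?_⟩
        rw [hrσ]
        exact hr'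
      have hmin := ih (ρ ∘ i₀.succAbove) (σ ∘ j₀.succAbove) hρ' hσ' hgood'
      have hpiv := pivot (Matrix.of fun i j => G.inc (ρ i) (σ j)) i₀ j₀ hcol
      have hmeq : ((Matrix.of fun i j => G.inc (ρ i) (σ j)).submatrix i₀.succAbove
            j₀.succAbove)
          = (Matrix.of fun i j => G.inc ((ρ ∘ i₀.succAbove) i) ((σ ∘ j₀.succAbove) j)) := rfl
      rw [hpiv, hsq1, hmeq, hmin, one_mul]

end DetLemmas

end WMG


namespace WMG

section Engine

variable {V E : Type} [Fintype V] [DecidableEq V] [Fintype E] [DecidableEq E]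

lemma engine {R : Type} [Fintype R] [DecidableEq R] (G : WMG V E)
    (ι : R → V) (hι : Function.Injective ι) (c : E → ℝ) :
    Matrix.det (Matrix.of fun i j : R => ∑ e, c e * G.inc (ι i) e * G.inc (ι j) e)
      = ∑ S : Finset E,
          if S.card = Fintype.card R ∧
              (∀ x : V, ∃ t, t ∉ Set.range ι ∧ Relation.ReflTransGen (G.Step ↑S) x t)
            then ∏ e ∈ S, c e else 0 := by
  classical
  set A : R → E → ℝ := fun i e => G.inc (ι i) e with hA
  set F : (R → E) → ℝ := fun u => (∏ i, (c (u i) * A i (u i))) *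
      Matrix.det (Matrix.of fun i j : R => A j (u i)) with hF
  have step1 : Matrix.det (Matrix.of fun i j : R => ∑ e, c e * A i e * A j e)
      = ∑ u : R → E, F u := by
    have hdet : ∀ M : Matrix R R ℝ,
        M.det = (Matrix.detRowAlternating : (R → ℝ) [⋀^R]→ₗ[ℝ] ℝ).toMultilinearMap M :=
      fun _ => rfl
    have hM : (Matrix.of fun i j : R => ∑ e, c e * A i e * A j e)
        = fun i => ∑ e, (c e * A i e) • (fun j => A j e) := by
      funext i j
      simp only [Matrix.of_apply, Finset.sum_apply, Pi.smul_apply, smul_eq_mul, mul_assoc]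
    rw [hdet, hM,
      (Matrix.detRowAlternating : (R → ℝ) [⋀^R]→ₗ[ℝ] ℝ).toMultilinearMap.map_sum]
    refine Finset.sum_congr rfl fun u _ => ?_
    rw [(Matrix.detRowAlternating : (R → ℝ) [⋀^R]→ₗ[ℝ] ℝ).toMultilinearMap.map_smul_univ]
    rw [smul_eq_mul, hF]
    rfl
  rw [step1,
    ← Finset.sum_fiberwise_of_maps_to
      (g := fun u : R → E => Finset.image u Finset.univ)
      (fun u _ => Finset.mem_univ _) F]
  refine Finset.sum_congr rfl fun S _ => ?_
  by_cases hcard : S.card = Fintype.card R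
  swap
  · rw [if_neg (fun hc => hcard hc.1)]
    refine Finset.sum_eq_zero fun u hu => ?_
    rw [Finset.mem_filter] at hu
    have hninj : ¬ Function.Injective u := by
      intro hinj
      apply hcard
      rw [← hu.2, Finset.card_image_of_injective _ hinj, Finset.card_univ]
    obtain ⟨i1, i2, heq, hne⟩ := Function.not_injective_iff.mp hninj
    have hdet0 : Matrix.det (Matrix.of fun i j : R => A j (u i)) = 0 :=
      Matrix.det_zero_of_row_eq hne (funext fun j => by
        show A j (u i1) = A j (u i2); rw [heq])
    rw [hF]
    simp only [hdet0, mul_zero]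
  · -- the fixed enumeration of S
    have hcard' : Fintype.card R = S.card := hcard.symm
    set ε : R ≃ {x // x ∈ S} :=
      (Fintype.equivFin R).trans ((finCongr hcard').trans S.equivFin.symm) with hε
    set u₀ : R → E := fun i => ((ε i : {x // x ∈ S}) : E) with hu₀
    have hu₀inj : Function.Injective u₀ := fun i j h => ε.injective (Subtype.ext h)
    have himg : Finset.image u₀ Finset.univ = S := by
      ext e
      simp only [Finset.mem_image, Finset.mem_univ, true_and]
      constructor
      · rintro ⟨i, rfl⟩; exact (ε i).2
      · intro he; exact ⟨ε.symm ⟨e, he⟩, by simp [hu₀]⟩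
    have hrange : Set.range u₀ = ↑S := by
      ext e
      simp only [Set.mem_range, Finset.mem_coe]
      constructor
      · rintro ⟨i, rfl⟩; exact (ε i).2
      · intro he; exact ⟨ε.symm ⟨e, he⟩, by simp [hu₀]⟩
    set D : Matrix R R ℝ := Matrix.of fun i j : R => A j (u₀ i) with hD
    -- the fiber over S is parametrized by permutations
    have hfiber : (∑ u ∈ Finset.univ.filter
          (fun u : R → E => Finset.image u Finset.univ = S), F u)
        = ∑ π : Equiv.Perm R, F (u₀ ∘ π) := by
      rw [Finset.sum_subtype (Finset.univ.filter
          (fun u : R → E => Finset.image u Finset.univ = S))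
          (p := fun u : R → E => Finset.image u Finset.univ = S)
          (by intro u; simp) F]
      set Ψ : Equiv.Perm R → {u : R → E // Finset.image u Finset.univ = S} :=
        fun π => ⟨u₀ ∘ π, by
          rw [← himg]
          ext e
          simp only [Finset.mem_image, Finset.mem_univ, true_and, Function.comp_apply]
          exact ⟨fun ⟨r, h⟩ => ⟨π r, h⟩, fun ⟨r, h⟩ => ⟨π.symm r, by simpa using h⟩⟩⟩ with hΨ
      have hΨbij : Function.Bijective Ψ := by
        constructor
        · intro π1 π2 h
          have h' : u₀ ∘ π1 = u₀ ∘ π2 := congrArg Subtype.val h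
          ext r
          exact hu₀inj (congrFun h' r)
        · rintro ⟨u, hu⟩
          have huinj : Function.Injective u := by
            have hinj2 : Set.InjOn u ↑(Finset.univ : Finset R) :=
              Finset.injOn_of_card_image_eq (by rw [hu, Finset.card_univ, hcard])
            exact fun a b h => hinj2 (Finset.mem_coe.mpr (Finset.mem_univ a))
              (Finset.mem_coe.mpr (Finset.mem_univ b)) h
          have hmem : ∀ r, u r ∈ S := by
            intro r; rw [← hu]; exact Finset.mem_image_of_mem u (Finset.mem_univ r)
          set g : R → R := fun r => ε.symm ⟨u r, hmem r⟩ with hg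
          have hginj : Function.Injective g := by
            intro a b h
            have := ε.symm.injective h
            exact huinj (congrArg Subtype.val this)
          obtain ⟨hgbij⟩ : Nonempty (Function.Bijective g) :=
            ⟨(Finite.injective_iff_bijective).mp hginj⟩
          refine ⟨Equiv.ofBijective g hgbij, ?_⟩
          apply Subtype.ext
          funext r
          show u₀ (g r) = u r
          rw [hg, hu₀]
          simp
      rw [← Fintype.sum_bijective Ψ hΨbij (fun π => F (u₀ ∘ π)) (fun u => F ↑u)
        (fun π => rfl)]
    rw [hfiber]
    -- compute the sum over permutations
    have hprodc : ∀ π : Equiv.Perm R, (∏ i, c (u₀ (π i))) = ∏ e ∈ S, c e := by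
      intro π
      rw [Equiv.prod_comp π (fun i => c (u₀ i)), ← himg,
        Finset.prod_image (fun a _ b _ h => hu₀inj h)]
    have hperm : ∀ π : Equiv.Perm R, F (u₀ ∘ π)
        = (∏ e ∈ S, c e) * ((Equiv.Perm.sign π : ℝ) * (∏ i, A i (u₀ (π i)))) *
            Matrix.det D := by
      intro π
      rw [hF]
      simp only [Function.comp_apply]
      rw [Finset.prod_mul_distrib, hprodc π]
      have hsub : (Matrix.of fun i j : R => A j (u₀ (π i))) = D.submatrix π id := rfl
      rw [hsub, Matrix.det_permute]
      push_cast
      ring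
    rw [Finset.sum_congr rfl fun π _ => hperm π]
    rw [← Finset.sum_mul, ← Finset.mul_sum]
    have hdetD : (∑ π : Equiv.Perm R, (Equiv.Perm.sign π : ℝ) * ∏ i, A i (u₀ (π i)))
        = Matrix.det D := by
      rw [Matrix.det_apply]
      refine Finset.sum_congr rfl fun π _ => ?_
      rw [Units.smul_def, zsmul_eq_mul]
      push_cast
      rfl
    rw [hdetD]
    -- identify (det D)^2 with the indicator
    have hDsq : Matrix.det D * Matrix.det D
        = if (∀ x : V, ∃ t, t ∉ Set.range ι ∧ Relation.ReflTransGen (G.Step ↑S) x t)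
          then 1 else 0 := by
      set eR := Fintype.equivFin R with heR
      have hDT : Matrix.det D
          = Matrix.det (Matrix.of fun i j : Fin (Fintype.card R) =>
              G.inc (ι (eR.symm i)) (u₀ (eR.symm j))) := by
        rw [← Matrix.det_transpose D, ← Matrix.det_submatrix_equiv_self eR.symm Dᵀ]
        rfl
      have hrρ : Set.range (fun i : Fin (Fintype.card R) => ι (eR.symm i)) = Set.range ι :=
        Function.Surjective.range_comp eR.symm.surjective ι
      have hrσ : Set.range (fun j : Fin (Fintype.card R) => u₀ (eR.symm j)) = ↑S :=
        (Function.Surjective.range_comp eR.symm.surjective u₀).trans hrange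
      by_cases hgood : ∀ x : V, ∃ t, t ∉ Set.range ι ∧
          Relation.ReflTransGen (G.Step ↑S) x t
      · rw [if_pos hgood, hDT]
        have := claimA (G := G) (Fintype.card R)
          (fun i => ι (eR.symm i)) (fun j => u₀ (eR.symm j))
          (hι.comp eR.symm.injective) (hu₀inj.comp eR.symm.injective)
          (by rw [hrρ, hrσ]; exact hgood)
        rw [← pow_two]
        exact this
      · rw [if_neg hgood, hDT]
        push_neg at hgood
        obtain ⟨x, hxx⟩ := hgood
        have := claimB (G := G)
          (fun i => ι (eR.symm i)) (fun j => u₀ (eR.symm j))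
          (hι.comp eR.symm.injective)
          ⟨x, by rw [hrρ, hrσ]; exact hxx⟩
        rw [this, mul_zero]
    rw [mul_assoc, hDsq]
    by_cases hgood : ∀ x : V, ∃ t, t ∉ Set.range ι ∧
        Relation.ReflTransGen (G.Step ↑S) x t
    · rw [if_pos hgood, if_pos ⟨hcard, hgood⟩, mul_one]
    · rw [if_neg hgood, if_neg (fun hc => hgood hc.2), mul_zero]

end Engine

end WMG


namespace WMG

section MainAux

variable {V E : Type} [Fintype V] [DecidableEq V] [Fintype E] [DecidableEq E]

lemma card_ne {α : Type} [Fintype α] [DecidableEq α] (a : α) :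
    Fintype.card {x : α // x ≠ a} = Fintype.card α - 1 := by
  have h1 := Fintype.card_subtype_compl (fun x : α => x = a)
  rw [Fintype.card_subtype_eq] at h1
  calc Fintype.card {x : α // x ≠ a}
      = Fintype.card {x : α // ¬ x = a} :=
        Fintype.card_congr (Equiv.subtypeEquivRight (fun _ => Iff.rfl))
    _ = Fintype.card α - 1 := h1

lemma connectedVia_anchor (G : WMG V E) {S : Set E} (v₀ : V)
    (h : ∀ x, Relation.ReflTransGen (G.Step S) x v₀) : G.ConnectedVia S :=
  fun x y => (h x).trans (reach_symm (h y))

lemma good_one_iff (G : WMG V E) (p : V) (S : Finset E) :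
    (S.card = Fintype.card {y : V // y ≠ p} ∧
      (∀ x : V, ∃ t, t ∉ Set.range (Subtype.val : {y : V // y ≠ p} → V) ∧
        Relation.ReflTransGen (G.Step (↑S : Set E)) x t))
    ↔ G.IsSpanningTree S := by
  have hrange : Set.range (Subtype.val : {y : V // y ≠ p} → V) = {y : V | y ≠ p} :=
    Subtype.range_coe_subtype
  have hV1 : 1 ≤ Fintype.card V := Fintype.card_pos_iff.mpr ⟨p⟩
  constructor
  · rintro ⟨hc, hgood⟩
    refine ⟨?_, ?_⟩
    · rw [hc, card_ne]; omega
    · refine connectedVia_anchor G p (fun x => ?_)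
      obtain ⟨t, ht, hr⟩ := hgood x
      rw [hrange] at ht
      have htp : t = p := by by_contra hne; exact ht hne
      rw [← htp]; exact hr
  · rintro ⟨hc, hconn⟩
    refine ⟨by rw [card_ne]; omega, fun x => ⟨p, ?_, hconn x p⟩⟩
    rw [hrange]; exact fun hmem => hmem rfl

lemma prod_inv_compl (ℓ : E → ℝ) (hℓ : ∀ e, 0 < ℓ e) (S : Finset E) :
    (∏ e ∈ S, (ℓ e)⁻¹) * ∏ e, ℓ e = ∏ e ∈ Sᶜ, ℓ e := by
  rw [← Finset.prod_mul_prod_compl S ℓ, ← mul_assoc, ← Finset.prod_mul_distrib]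
  rw [Finset.prod_congr rfl (fun e (_ : e ∈ S) => inv_mul_cancel₀ (hℓ e).ne'),
    Finset.prod_const_one, one_mul]

lemma eta_eq_det (G : WMG V E) (ℓ : E → ℝ) (hℓ : ∀ e, 0 < ℓ e) (p : V) :
    Matrix.det (Matrix.of fun i j : {y : V // y ≠ p} =>
        ∑ e, (ℓ e)⁻¹ * G.inc (↑i) e * G.inc (↑j) e) * ∏ e, ℓ e
      = G.eta ℓ := by
  rw [engine G Subtype.val Subtype.coe_injective (fun e => (ℓ e)⁻¹), eta, Finset.sum_mul]
  refine Finset.sum_congr rfl fun S _ => ?_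
  by_cases hsp : G.IsSpanningTree S
  · rw [if_pos ((good_one_iff G p S).mpr hsp), if_pos hsp, prod_inv_compl ℓ hℓ S]
  · rw [if_neg (fun hc => hsp ((good_one_iff G p S).mp hc)), if_neg hsp, zero_mul]

lemma detU_eq (G : WMG V E) (k : E) (hk : (G.ends k).1 ≠ (G.ends k).2)
    (ℓ : E → ℝ) (hℓ : ∀ e, 0 < ℓ e) :
    Matrix.det (Matrix.of
        fun i j : {x : {y : V // y ≠ (G.ends k).2} // x ≠ ⟨(G.ends k).1, hk⟩} =>
        ∑ e, (ℓ e)⁻¹ * G.inc (↑↑i : V) e * G.inc (↑↑j : V) e) * ∏ e, ℓ e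
      = ℓ k * G.eta (Function.update ℓ k 0) := by
  classical
  set ι₂ : {x : {y : V // y ≠ (G.ends k).2} // x ≠ ⟨(G.ends k).1, hk⟩} → V :=
    fun x => ((x : {y : V // y ≠ (G.ends k).2}) : V) with hι₂def
  have hι₂inj : Function.Injective ι₂ := fun x y h => Subtype.ext (Subtype.ext h)
  have hrange : Set.range ι₂ = {y : V | y ≠ (G.ends k).2 ∧ y ≠ (G.ends k).1} := by
    ext y
    constructor
    · rintro ⟨x, rfl⟩
      exact ⟨x.1.2, fun h => x.2 (Subtype.ext h)⟩
    · rintro ⟨h1, h2⟩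
      exact ⟨⟨⟨y, h1⟩, fun hh => h2 (congrArg Subtype.val hh)⟩, rfl⟩
  have hV2 : 2 ≤ Fintype.card V := by
    have : Nontrivial V := ⟨(G.ends k).1, (G.ends k).2, hk⟩
    exact Fintype.one_lt_card
  have hcard2 : Fintype.card {x : {y : V // y ≠ (G.ends k).2} // x ≠ ⟨(G.ends k).1, hk⟩}
      = Fintype.card V - 2 := by
    rw [card_ne, card_ne]; omega
  have hmat : (Matrix.of
        fun i j : {x : {y : V // y ≠ (G.ends k).2} // x ≠ ⟨(G.ends k).1, hk⟩} =>
        ∑ e, (ℓ e)⁻¹ * G.inc (↑↑i : V) e * G.inc (↑↑j : V) e)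
      = (Matrix.of
        fun i j : {x : {y : V // y ≠ (G.ends k).2} // x ≠ ⟨(G.ends k).1, hk⟩} =>
        ∑ e, (ℓ e)⁻¹ * G.inc (ι₂ i) e * G.inc (ι₂ j) e) := rfl
  rw [hmat, engine G ι₂ hι₂inj (fun e => (ℓ e)⁻¹)]
  -- the right-hand side as a sum over spanning trees containing k
  have hRHS : ℓ k * G.eta (Function.update ℓ k 0)
      = ∑ T : Finset E, if G.IsSpanningTree T ∧ k ∈ T then ℓ k * ∏ e ∈ Tᶜ, ℓ e else 0 := by
    rw [eta, Finset.mul_sum]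
    refine Finset.sum_congr rfl fun T _ => ?_
    by_cases hsp : G.IsSpanningTree T
    · by_cases hkT : k ∈ T
      · rw [if_pos hsp, if_pos ⟨hsp, hkT⟩]
        congr 1
        refine Finset.prod_congr rfl fun e he => ?_
        exact Function.update_of_ne (fun hek => (Finset.mem_compl.mp he) (by rw [hek]; exact hkT)) 0 ℓ
      · rw [if_pos hsp, if_neg (fun hc => hkT hc.2),
          Finset.prod_eq_zero (Finset.mem_compl.mpr hkT) (Function.update_self k 0 ℓ),
          mul_zero]
    · rw [if_neg hsp, if_neg (fun hc => hsp hc.1), mul_zero]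
  rw [hRHS, Finset.sum_mul]
  -- simplify left summands
  have hLterm : ∀ S : Finset E,
      ((if S.card = Fintype.card {x : {y : V // y ≠ (G.ends k).2} // x ≠ ⟨(G.ends k).1, hk⟩} ∧
          (∀ x : V, ∃ t, t ∉ Set.range ι₂ ∧ Relation.ReflTransGen (G.Step ↑S) x t)
        then ∏ e ∈ S, (ℓ e)⁻¹ else 0) * ∏ e, ℓ e)
      = (if S.card = Fintype.card {x : {y : V // y ≠ (G.ends k).2} // x ≠ ⟨(G.ends k).1, hk⟩} ∧
          (∀ x : V, ∃ t, t ∉ Set.range ι₂ ∧ Relation.ReflTransGen (G.Step ↑S) x t)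
        then ∏ e ∈ Sᶜ, ℓ e else 0) := by
    intro S
    by_cases hc : S.card = Fintype.card {x : {y : V // y ≠ (G.ends k).2} // x ≠ ⟨(G.ends k).1, hk⟩} ∧
        (∀ x : V, ∃ t, t ∉ Set.range ι₂ ∧ Relation.ReflTransGen (G.Step ↑S) x t)
    · rw [if_pos hc, if_pos hc, prod_inv_compl ℓ hℓ S]
    · rw [if_neg hc, if_neg hc, zero_mul]
  rw [Finset.sum_congr rfl fun S _ => hLterm S]
  -- k is not a member of any good S
  have knotmem : ∀ S : Finset E,
      (S.card = Fintype.card {x : {y : V // y ≠ (G.ends k).2} // x ≠ ⟨(G.ends k).1, hk⟩} ∧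
        (∀ x : V, ∃ t, t ∉ Set.range ι₂ ∧ Relation.ReflTransGen (G.Step ↑S) x t)) → k ∉ S := by
    rintro S ⟨hcardS, hgood⟩ hkS
    set n := Fintype.card {x : {y : V // y ≠ (G.ends k).2} // x ≠ ⟨(G.ends k).1, hk⟩} with hn
    set eqv := Fintype.equivFin {x : {y : V // y ≠ (G.ends k).2} // x ≠ ⟨(G.ends k).1, hk⟩}
      with heqv
    set ρ : Fin n → V := fun i => ι₂ (eqv.symm i) with hρdef
    have hρinj : Function.Injective ρ := hι₂inj.comp eqv.symm.injective
    set iso : Fin n ≃ {x // x ∈ S} := (S.equivFin.trans (finCongr hcardS)).symm with hiso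
    set σ : Fin n → E := fun i => ((iso i : {x // x ∈ S}) : E) with hσdef
    have hσinj : Function.Injective σ := fun i j h => iso.injective (Subtype.ext h)
    have hrρ : Set.range ρ = Set.range ι₂ :=
      Function.Surjective.range_comp eqv.symm.surjective ι₂
    have hrσ : Set.range σ = ↑S := by
      ext e
      simp only [Set.mem_range, Finset.mem_coe]
      constructor
      · rintro ⟨i, rfl⟩; exact (iso i).2
      · intro he; exact ⟨iso.symm ⟨e, he⟩, by simp [hσdef]⟩
    have hA := claimA (G := G) n ρ σ hρinj hσinj (by rw [hrρ, hrσ]; exact hgood)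
    set j₀ := iso.symm ⟨k, hkS⟩ with hj₀
    have hσj₀ : σ j₀ = k := by rw [hσdef, hj₀]; simp
    have hzero : ∀ i, (Matrix.of fun i j => G.inc (ρ i) (σ j)) i j₀ = 0 := by
      intro i
      show G.inc (ρ i) (σ j₀) = 0
      rw [hσj₀, inc]
      have h1 : ¬ ((G.ends k).1 = ρ i) := by
        intro hh
        exact (eqv.symm i).2 (Subtype.ext hh.symm)
      have h2 : ¬ ((G.ends k).2 = ρ i) := by
        intro hh
        exact ((eqv.symm i) : {y : V // y ≠ (G.ends k).2}).2 hh.symm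
      rw [if_neg h1, if_neg h2, sub_zero]
    have h0 : Matrix.det (Matrix.of fun i j => G.inc (ρ i) (σ j)) = 0 :=
      Matrix.det_eq_zero_of_column_eq_zero j₀ hzero
    rw [h0] at hA; norm_num at hA
  -- bijection between good sets and spanning trees containing k
  rw [← Finset.sum_filter, ← Finset.sum_filter]
  refine Finset.sum_bij' (i := fun S _ => insert k S) (j := fun T _ => T.erase k)
    ?_ ?_ ?_ ?_ ?_
  · -- hi : maps into target filter
    intro S hS
    rw [Finset.mem_filter] at hS
    obtain ⟨_, hcardS, hgood⟩ := hS
    have hkS : k ∉ S := knotmem S ⟨hcardS, hgood⟩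
    rw [Finset.mem_filter]
    refine ⟨Finset.mem_univ _, ⟨?_, ?_⟩, Finset.mem_insert_self k S⟩
    · rw [Finset.card_insert_of_notMem hkS, hcardS, hcard2]; omega
    · refine connectedVia_anchor G (G.ends k).1 (fun x => ?_)
      obtain ⟨t, ht, hr⟩ := hgood x
      have hr' : Relation.ReflTransGen (G.Step ↑(insert k S)) x t :=
        reach_mono (Finset.coe_subset.mpr (Finset.subset_insert k S)) hr
      rw [hrange] at ht
      by_cases hta : t = (G.ends k).1
      · exact hta ▸ hr'
      · have htp : t = (G.ends k).2 := by
          by_contra htp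
          exact ht ⟨htp, hta⟩
        have hstep : G.Step ↑(insert k S) (G.ends k).2 (G.ends k).1 :=
          ⟨k, by simp, Or.inr Prod.mk.eta.symm⟩
        rw [htp] at hr'
        exact hr'.trans (Relation.ReflTransGen.single hstep)
  · -- hj : erase maps back
    intro T hT
    rw [Finset.mem_filter] at hT
    obtain ⟨_, ⟨hcardT, hconn⟩, hkT⟩ := hT
    rw [Finset.mem_filter]
    refine ⟨Finset.mem_univ _, ?_, ?_⟩
    · rw [Finset.card_erase_of_mem hkT, hcard2]; omega
    · intro x
      have hr : Relation.ReflTransGen (G.Step ↑T) x (G.ends k).1 := hconn x (G.ends k).1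
      have h1 : (G.ends k).1 ∈ (Set.range ι₂)ᶜ := by
        rw [hrange]; exact fun hc => hc.2 rfl
      have h2 : (G.ends k).2 ∈ (Set.range ι₂)ᶜ := by
        rw [hrange]; exact fun hc => hc.1 rfl
      obtain ⟨t', ht', hr'⟩ := remove_edge h1 h2 hr h1
      refine ⟨t', ht', ?_⟩
      rw [Finset.coe_erase]
      exact hr'
  · -- left inverse
    intro S hS
    rw [Finset.mem_filter] at hS
    exact Finset.erase_insert (knotmem S hS.2)
  · -- right inverse
    intro T hT
    rw [Finset.mem_filter] at hT
    exact Finset.insert_erase hT.2.2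
  · -- values
    intro S hS
    rw [Finset.mem_filter] at hS
    have hkS : k ∉ S := knotmem S hS.2
    have hkSc : k ∈ Sᶜ := Finset.mem_compl.mpr hkS
    rw [Finset.compl_insert, ← Finset.mul_prod_erase Sᶜ ℓ hkSc]

end MainAux

end WMG


namespace WMG

section ResAux

variable {V E : Type} [Fintype V] [DecidableEq V] [Fintype E] [DecidableEq E]

lemma det_updateColumn_single {R : Type} [Fintype R] [DecidableEq R]
    (A : Matrix R R ℝ) (r₀ : R) :
    (A.updateCol r₀ (Pi.single r₀ 1)).det
      = Matrix.det (Matrix.of fun i j : {x : R // x ≠ r₀} => A ↑i ↑j) := by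
  classical
  rw [← Matrix.det_submatrix_equiv_self (Equiv.sumCompl (fun x => x = r₀))]
  have hblocks : (A.updateCol r₀ (Pi.single r₀ 1)).submatrix
        (Equiv.sumCompl (fun x => x = r₀)) (Equiv.sumCompl (fun x => x = r₀))
      = Matrix.fromBlocks 1
          (Matrix.of fun (_ : {x : R // x = r₀}) (j : {x : R // x ≠ r₀}) => A r₀ ↑j)
          0 (Matrix.of fun i j : {x : R // x ≠ r₀} => A ↑i ↑j) := by
    ext i j
    rcases i with i | i <;> rcases j with j | j <;>
      simp only [Matrix.submatrix_apply, Equiv.sumCompl_apply_inl, Equiv.sumCompl_apply_inr,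
        Matrix.fromBlocks_apply₁₁, Matrix.fromBlocks_apply₁₂, Matrix.fromBlocks_apply₂₁,
        Matrix.fromBlocks_apply₂₂, Matrix.of_apply, Matrix.zero_apply]
    · have hij : i = j := Subtype.ext (i.2.trans j.2.symm)
      subst hij
      rw [Matrix.updateCol_apply, if_pos i.2, Matrix.one_apply_eq]
      rw [i.2, Pi.single_eq_same]
    · rw [Matrix.updateCol_apply, if_neg j.2, i.2]
    · rw [Matrix.updateCol_apply, if_pos j.2]
      exact Pi.single_eq_of_ne i.2 1
    · rw [Matrix.updateCol_apply, if_neg j.2]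
  rw [hblocks, Matrix.det_fromBlocks_zero₂₁, Matrix.det_one, one_mul]

lemma colsum (G : WMG V E) (ℓ : E → ℝ) (y : V) : (∑ x, G.lap ℓ x y) = 0 := by
  simp only [lap_apply_inc]
  rw [Finset.sum_comm]
  refine Finset.sum_eq_zero fun e _ => ?_
  have hre : ∀ x, (ℓ e)⁻¹ * G.inc x e * G.inc y e = ((ℓ e)⁻¹ * G.inc y e) * G.inc x e := by
    intro x; ring
  rw [Finset.sum_congr rfl fun x _ => hre x, ← Finset.mul_sum]
  have hz : (∑ x, G.inc x e) = 0 := by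
    simp only [inc, Finset.sum_sub_distrib]
    rw [Finset.sum_ite_eq Finset.univ (G.ends e).1 (fun _ => (1:ℝ)),
      Finset.sum_ite_eq Finset.univ (G.ends e).2 (fun _ => (1:ℝ))]
    simp
  rw [hz, mul_zero]

lemma sum_split (G : WMG V E) (ℓ : E → ℝ) (p : V) (g : V → ℝ) (x : V) :
    (∑ y, G.lap ℓ x y * g y)
      = (∑ j : {y : V // y ≠ p}, G.lap ℓ x ↑j * g ↑j) + G.lap ℓ x p * g p := by
  rw [← Finset.sum_erase_add Finset.univ _ (Finset.mem_univ p)]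
  congr 1
  rw [Finset.sum_subtype (p := fun y => y ≠ p) (Finset.univ.erase p) (fun y => by simp)
    (fun y => G.lap ℓ x y * g y)]

lemma posdef_Q (G : WMG V E) (hG : G.Connected) (ℓ : E → ℝ) (hℓ : ∀ e, 0 < ℓ e) (p : V) :
    (Matrix.of fun i j : {y : V // y ≠ p} =>
        ∑ e, (ℓ e)⁻¹ * G.inc (↑i) e * G.inc (↑j) e).PosDef := by
  refine Matrix.posDef_iff_dotProduct_mulVec.mpr ⟨?_, ?_⟩
  · ext i j
    simp only [Matrix.conjTranspose_apply, Matrix.of_apply, star_trivial]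
    exact Finset.sum_congr rfl fun e _ => by ring
  · intro x hx
    have hstar : star x = x := funext fun i => rfl
    rw [hstar]
    have hq : x ⬝ᵥ ((Matrix.of fun i j : {y : V // y ≠ p} =>
          ∑ e, (ℓ e)⁻¹ * G.inc (↑i) e * G.inc (↑j) e) *ᵥ x)
        = ∑ e, (ℓ e)⁻¹ * ((∑ i : {y : V // y ≠ p}, x i * G.inc (↑i) e)
            * (∑ j : {y : V // y ≠ p}, x j * G.inc (↑j) e)) := by
      simp only [dotProduct, Matrix.mulVec, Matrix.of_apply]
      have step : ∀ i : {y : V // y ≠ p},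
          x i * (∑ j : {y : V // y ≠ p}, (∑ e, (ℓ e)⁻¹ * G.inc (↑i) e * G.inc (↑j) e) * x j)
          = ∑ e, ∑ j : {y : V // y ≠ p},
              (ℓ e)⁻¹ * (x i * G.inc (↑i) e) * (x j * G.inc (↑j) e) := by
        intro i
        calc x i * (∑ j : {y : V // y ≠ p}, (∑ e, (ℓ e)⁻¹ * G.inc (↑i) e * G.inc (↑j) e) * x j)
            = ∑ j : {y : V // y ≠ p}, ∑ e,
                x i * (((ℓ e)⁻¹ * G.inc (↑i) e * G.inc (↑j) e) * x j) := by
              rw [Finset.mul_sum]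
              refine Finset.sum_congr rfl fun j _ => ?_
              rw [Finset.sum_mul, Finset.mul_sum]
          _ = ∑ e, ∑ j : {y : V // y ≠ p},
                (ℓ e)⁻¹ * (x i * G.inc (↑i) e) * (x j * G.inc (↑j) e) := by
              rw [Finset.sum_comm]
              exact Finset.sum_congr rfl fun e _ => Finset.sum_congr rfl fun j _ => by ring
      rw [Finset.sum_congr rfl fun i _ => step i, Finset.sum_comm]
      refine Finset.sum_congr rfl fun e _ => ?_
      calc ∑ i : {y : V // y ≠ p}, ∑ j : {y : V // y ≠ p},
              (ℓ e)⁻¹ * (x i * G.inc (↑i) e) * (x j * G.inc (↑j) e)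
          = ∑ i : {y : V // y ≠ p},
              ((ℓ e)⁻¹ * (x i * G.inc (↑i) e)) * (∑ j : {y : V // y ≠ p}, x j * G.inc (↑j) e) := by
            refine Finset.sum_congr rfl fun i _ => ?_; rw [← Finset.mul_sum]
        _ = (ℓ e)⁻¹ * ((∑ i : {y : V // y ≠ p}, x i * G.inc (↑i) e)
              * (∑ j : {y : V // y ≠ p}, x j * G.inc (↑j) e)) := by
            rw [← Finset.sum_mul, ← Finset.mul_sum, mul_assoc]
    rw [hq]
    have hnonneg : ∀ e ∈ Finset.univ,
        (0:ℝ) ≤ (ℓ e)⁻¹ * ((∑ i : {y : V // y ≠ p}, x i * G.inc (↑i) e)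
          * (∑ j : {y : V // y ≠ p}, x j * G.inc (↑j) e)) :=
      fun e _ => mul_nonneg (inv_nonneg.mpr (hℓ e).le) (mul_self_nonneg _)
    have hexists : ∃ e ∈ Finset.univ,
        (0:ℝ) < (ℓ e)⁻¹ * ((∑ i : {y : V // y ≠ p}, x i * G.inc (↑i) e)
          * (∑ j : {y : V // y ≠ p}, x j * G.inc (↑j) e)) := by
      by_contra hno
      push_neg at hno
      have hW0 : ∀ e, (∑ i : {y : V // y ≠ p}, x i * G.inc (↑i) e) = 0 := by
        intro e
        have h3 : (ℓ e)⁻¹ * ((∑ i : {y : V // y ≠ p}, x i * G.inc (↑i) e)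
            * (∑ j : {y : V // y ≠ p}, x j * G.inc (↑j) e)) = 0 :=
          le_antisymm (hno e (Finset.mem_univ e)) (hnonneg e (Finset.mem_univ e))
        rcases mul_eq_zero.mp h3 with h | h
        · exact absurd h (inv_ne_zero (hℓ e).ne')
        · exact mul_self_eq_zero.mp h
      set xh : V → ℝ := fun y => if h : y = p then 0 else x ⟨y, h⟩ with hxh
      have hind : ∀ y : V,
          (∑ i : {y : V // y ≠ p}, x i * (if y = ↑i then (1:ℝ) else 0)) = xh y := by
        intro y
        by_cases hy : y = p
        · subst hy
          rw [Finset.sum_eq_zero, hxh]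
          · simp
          · intro i _; rw [if_neg (fun hh => i.2 hh.symm), mul_zero]
        · rw [Finset.sum_eq_single ⟨y, hy⟩]
          · rw [if_pos rfl, mul_one, hxh]; simp only [dif_neg hy]
          · intro i _ hne; rw [if_neg (fun hh => hne (Subtype.ext hh.symm)), mul_zero]
          · intro hmem; exact absurd (Finset.mem_univ _) hmem
      have hedge : ∀ e, xh (G.ends e).1 = xh (G.ends e).2 := by
        intro e
        have hsubd : ∀ i : {y : V // y ≠ p}, x i * G.inc (↑i) e
            = x i * (if (G.ends e).1 = ↑i then (1:ℝ) else 0)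
              - x i * (if (G.ends e).2 = ↑i then (1:ℝ) else 0) := by
          intro i; rw [inc, mul_sub]
        have h1 : (∑ i : {y : V // y ≠ p}, x i * G.inc (↑i) e)
            = xh (G.ends e).1 - xh (G.ends e).2 := by
          rw [Finset.sum_congr rfl fun i _ => hsubd i, Finset.sum_sub_distrib, hind, hind]
        have h2 := hW0 e
        rw [h1] at h2
        linarith
      have hstepinv : ∀ u v', G.Step Set.univ u v' → xh u = xh v' := by
        rintro u v' ⟨f, _, hor⟩
        rcases hor with h | h
        · have := hedge f; rw [h] at this; exact this
        · have := hedge f; rw [h] at this; exact this.symm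
      have hreachinv : ∀ u v', Relation.ReflTransGen (G.Step Set.univ) u v' → xh u = xh v' := by
        intro u v' h
        induction h with
        | refl => rfl
        | tail _ hstep ih => exact ih.trans (hstepinv _ _ hstep)
      have hx0 : x = 0 := by
        funext i
        have h1 : xh ↑i = xh p := hreachinv ↑i p (hG ↑i p)
        have h2 : xh p = 0 := by rw [hxh]; simp
        have h3 : xh ↑i = x i := by rw [hxh]; simp only [dif_neg i.2]
        show x i = 0
        rw [← h3, h1, h2]
      exact hx hx0
    exact Finset.sum_pos' hnonneg hexists

end ResAux

end WMG

/-- Let `G` be a connected weighted multigraph and `e_k` an edge with distinct endpoints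
`p_i`, `p_j`.  Then for all positive edge lengths,
`r(p_i, p_j) · η_G(ℓ) = ℓ_k · (η_G(ℓ)|_{ℓ_k = 0})`; in particular `ℓ_k` divides the
polynomial `r(p_i, p_j) · η_G` and the quotient is `η_G` evaluated at `ℓ_k = 0`. -/
theorem stmt_5 {V E : Type} [Fintype V] [DecidableEq V] [Fintype E] [DecidableEq E]
    (G : WMG V E) (hG : G.Connected) (k : E) (hk : (G.ends k).1 ≠ (G.ends k).2)
    (ℓ : E → ℝ) (hℓ : ∀ k', 0 < ℓ k') :
    G.res ℓ (G.ends k).1 (G.ends k).2 * G.eta ℓ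
      = ℓ k * G.eta (Function.update ℓ k 0) := by
  classical
  have hQeta := WMG.eta_eq_det G ℓ hℓ (G.ends k).2
  have hUeta := WMG.detU_eq G k hk ℓ hℓ
  have hPD := WMG.posdef_Q G hG ℓ hℓ (G.ends k).2
  set Q : Matrix {y : V // y ≠ (G.ends k).2} {y : V // y ≠ (G.ends k).2} ℝ :=
    Matrix.of fun i j => ∑ e, (ℓ e)⁻¹ * G.inc (↑i) e * G.inc (↑j) e with hQdef
  have hdet : 0 < Q.det := hPD.det_pos
  have hdetne : Q.det ≠ 0 := ne_of_gt hdet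
  have hQlap : ∀ i j : {y : V // y ≠ (G.ends k).2}, Q i j = G.lap ℓ ↑i ↑j := by
    intro i j
    rw [hQdef]
    exact (WMG.lap_apply_inc G ℓ ↑i ↑j).symm
  set b' : {y : V // y ≠ (G.ends k).2} → ℝ := Pi.single ⟨(G.ends k).1, hk⟩ 1 with hb'
  set v' : {y : V // y ≠ (G.ends k).2} → ℝ := Q.det⁻¹ • Matrix.cramer Q b' with hv'
  have hQv' : Q *ᵥ v' = b' := by
    rw [hv', Matrix.mulVec_smul, Matrix.mulVec_cramer, smul_smul,
      inv_mul_cancel₀ hdetne, one_smul]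
  set w : V → ℝ := fun y => if h : y = (G.ends k).2 then 0 else v' ⟨y, h⟩ with hw
  have hwp : w (G.ends k).2 = 0 := by rw [hw]; simp
  have hwval : ∀ j : {y : V // y ≠ (G.ends k).2}, w ↑j = v' j := by
    intro j
    rw [hw]
    simp only [dif_neg j.2]
  have hrow : ∀ (v : V → ℝ) (x : V) (hx : x ≠ (G.ends k).2), v (G.ends k).2 = 0 →
      (G.lap ℓ *ᵥ v) x = (Q *ᵥ fun j : {y : V // y ≠ (G.ends k).2} => v ↑j) ⟨x, hx⟩ := by
    intro v x hx hvp
    show (∑ y, G.lap ℓ x y * v y) = _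
    rw [WMG.sum_split G ℓ (G.ends k).2 v x, hvp, mul_zero, add_zero]
    show _ = ∑ j : {y : V // y ≠ (G.ends k).2}, Q ⟨x, hx⟩ j * v ↑j
    refine Finset.sum_congr rfl fun j _ => ?_
    rw [hQlap ⟨x, hx⟩ j]
  have hbval : ∀ (x : V) (hx : x ≠ (G.ends k).2),
      b' ⟨x, hx⟩ = (WMG.delta (G.ends k).1 - WMG.delta (G.ends k).2) x := by
    intro x hx
    rw [hb']
    simp only [Pi.single_apply, WMG.delta, Pi.sub_apply]
    rw [if_neg hx, sub_zero]
    by_cases hxa : x = (G.ends k).1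
    · rw [if_pos (Subtype.ext hxa), if_pos hxa]
    · rw [if_neg (fun h => hxa (congrArg Subtype.val h)), if_neg hxa]
  have hmain_ne : ∀ (x : V) (hx : x ≠ (G.ends k).2),
      (G.lap ℓ *ᵥ w) x = (WMG.delta (G.ends k).1 - WMG.delta (G.ends k).2) x := by
    intro x hx
    rw [hrow w x hx hwp]
    have hfun : (fun j : {y : V // y ≠ (G.ends k).2} => w ↑j) = v' := funext hwval
    rw [hfun, hQv', hbval x hx]
  have htotL : (∑ x, (G.lap ℓ *ᵥ w) x) = 0 := by
    have hexp : ∀ x, (G.lap ℓ *ᵥ w) x = ∑ y, G.lap ℓ x y * w y := fun x => rfl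
    rw [Finset.sum_congr rfl fun x _ => hexp x, Finset.sum_comm]
    refine Finset.sum_eq_zero fun y _ => ?_
    rw [← Finset.sum_mul, WMG.colsum G ℓ y, zero_mul]
  have htotR : (∑ x, (WMG.delta (G.ends k).1 - WMG.delta (G.ends k).2) x) = 0 := by
    simp only [Pi.sub_apply, WMG.delta, Finset.sum_sub_distrib]
    rw [Finset.sum_ite_eq' Finset.univ (G.ends k).1 (fun _ => (1:ℝ)),
      Finset.sum_ite_eq' Finset.univ (G.ends k).2 (fun _ => (1:ℝ))]
    simp
  have hmain : G.lap ℓ *ᵥ w = WMG.delta (G.ends k).1 - WMG.delta (G.ends k).2 := by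
    funext x
    by_cases hx : x = (G.ends k).2
    · subst hx
      have e1 : (∑ z ∈ Finset.univ.erase (G.ends k).2, (G.lap ℓ *ᵥ w) z)
          = ∑ z ∈ Finset.univ.erase (G.ends k).2,
              (WMG.delta (G.ends k).1 - WMG.delta (G.ends k).2) z :=
        Finset.sum_congr rfl fun z hz => hmain_ne z (Finset.ne_of_mem_erase hz)
      have e2 := Finset.sum_erase_add Finset.univ (fun z => (G.lap ℓ *ᵥ w) z)
        (Finset.mem_univ (G.ends k).2)
      have e3 := Finset.sum_erase_add Finset.univ
        (fun z => (WMG.delta (G.ends k).1 - WMG.delta (G.ends k).2) z)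
        (Finset.mem_univ (G.ends k).2)
      rw [htotL] at e2
      rw [htotR] at e3
      linarith [e1, e2, e3]
    · exact hmain_ne x hx
  have huniq : ∀ v : V → ℝ,
      (G.lap ℓ *ᵥ v = WMG.delta (G.ends k).1 - WMG.delta (G.ends k).2
        ∧ v (G.ends k).2 = 0) → v = w := by
    rintro v ⟨hv1, hv2⟩
    have hQv : Q *ᵥ (fun j : {y : V // y ≠ (G.ends k).2} => v ↑j) = b' := by
      funext i
      have h2 := hrow v ↑i i.2 hv2
      rw [hv1] at h2
      have h3 := hbval ↑i i.2
      exact h2.symm.trans h3.symm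
    have hQunit : IsUnit Q.det := isUnit_iff_ne_zero.mpr hdetne
    have hinj : ∀ y z : {y : V // y ≠ (G.ends k).2} → ℝ, Q *ᵥ y = Q *ᵥ z → y = z := by
      intro y z hyz
      have h1 : Q⁻¹ *ᵥ (Q *ᵥ y) = Q⁻¹ *ᵥ (Q *ᵥ z) := by rw [hyz]
      rwa [Matrix.mulVec_mulVec, Matrix.mulVec_mulVec, Matrix.nonsing_inv_mul Q hQunit,
        Matrix.one_mulVec, Matrix.one_mulVec] at h1
    have hvv : (fun j : {y : V // y ≠ (G.ends k).2} => v ↑j) = v' :=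
      hinj _ _ (by rw [hQv, hQv'])
    funext y
    by_cases hy : y = (G.ends k).2
    · rw [hy, hv2, hwp]
    · rw [hw]
      simp only [dif_neg hy]
      exact congrFun hvv ⟨y, hy⟩
  have hex : ∃! v : V → ℝ,
      G.lap ℓ *ᵥ v = WMG.delta (G.ends k).1 - WMG.delta (G.ends k).2
        ∧ v (G.ends k).2 = 0 :=
    ⟨w, ⟨hmain, hwp⟩, fun v hv => huniq v hv⟩
  have hres : G.res ℓ (G.ends k).1 (G.ends k).2 = v' ⟨(G.ends k).1, hk⟩ := by
    rw [WMG.res, dif_pos hex]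
    rw [huniq _ hex.exists.choose_spec]
    rw [hw]
    simp only [dif_neg hk]
  have hcr : v' ⟨(G.ends k).1, hk⟩
      = Q.det⁻¹ * (Q.updateCol ⟨(G.ends k).1, hk⟩ b').det := by
    rw [hv']
    rw [Pi.smul_apply, smul_eq_mul, Matrix.cramer_apply]
  have hDU : (Q.updateCol ⟨(G.ends k).1, hk⟩ b').det
      = Matrix.det (Matrix.of
          fun i j : {x : {y : V // y ≠ (G.ends k).2} // x ≠ ⟨(G.ends k).1, hk⟩} =>
          ∑ e, (ℓ e)⁻¹ * G.inc (↑↑i : V) e * G.inc (↑↑j : V) e) := by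
    rw [hb', WMG.det_updateColumn_single Q ⟨(G.ends k).1, hk⟩]
    rfl
  rw [hres, hcr, hDU, ← hQeta, ← hUeta]
  calc Q.det⁻¹ * (Matrix.of
          fun i j : {x : {y : V // y ≠ (G.ends k).2} // x ≠ ⟨(G.ends k).1, hk⟩} =>
          ∑ e, (ℓ e)⁻¹ * G.inc (↑↑i : V) e * G.inc (↑↑j : V) e).det * (Q.det * ∏ e, ℓ e)
      = (Q.det⁻¹ * Q.det) * ((Matrix.of
          fun i j : {x : {y : V // y ≠ (G.ends k).2} // x ≠ ⟨(G.ends k).1, hk⟩} =>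
          ∑ e, (ℓ e)⁻¹ * G.inc (↑↑i : V) e * G.inc (↑↑j : V) e).det * ∏ e, ℓ e) := by
        ring
    _ = (Matrix.of
          fun i j : {x : {y : V // y ≠ (G.ends k).2} // x ≠ ⟨(G.ends k).1, hk⟩} =>
          ∑ e, (ℓ e)⁻¹ * G.inc (↑↑i : V) e * G.inc (↑↑j : V) e).det * ∏ e, ℓ e := by
        rw [inv_mul_cancel₀ hdetne, one_mul]
end
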